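/- Let Σ be a finite type and L ⊆ (ℕ → Σ) a closed ω-regular language. Then L is accepted by a Büchi automaton over Σ in which every state is accepting. -/

import Mathlib

/-- A Büchi automaton over alphabet `α`. -/
structure BuchiAutomaton (α : Type) where
  Q : Type
  [finQ : Fintype Q]
  δ : Q → α → Set Q
  init : Q
  F : Set Q

/-- The ω-language of a Büchi automaton: words admitting an accepting run. -/
def BuchiAutomaton.Lang {α : Type} (A : BuchiAutomaton α) : Set (ℕ → α) :=
  {w | ∃ r : ℕ → A.Q, r 0 = A.init ∧ (∀ k, r (k + 1) ∈ A.δ (r k) (w k)) ∧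
        {k | r k ∈ A.F}.Infinite}

/-- A language of ω-words is closed if it contains all its accumulation points. -/
def IsClosedLang {α : Type} (L : Set (ℕ → α)) : Prop :=
  ∀ w : ℕ → α, (∀ n : ℕ, ∃ v ∈ L, ∀ k < n, v k = w k) → w ∈ L

/-- A state is live if some accepting run starts at it. -/
def BuchiAutomaton.Live {α : Type} (A : BuchiAutomaton α) (q : A.Q) : Prop :=
  ∃ w : ℕ → α, ∃ r : ℕ → A.Q, r 0 = q ∧ (∀ k, r (k + 1) ∈ A.δ (r k) (w k)) ∧
    {k | r k ∈ A.F}.Infinite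

/-- Any closed ω-regular language over a finite alphabet is accepted by a
Büchi automaton in which every state is accepting. -/
theorem closed_omegaRegular_accepted_all_states_accepting {α : Type}
    [Fintype α] (L : Set (ℕ → α)) (hclosed : IsClosedLang L)
    (hreg : ∃ A : BuchiAutomaton α, A.Lang = L) :
    ∃ A : BuchiAutomaton α, (∀ q, q ∈ A.F) ∧ A.Lang = L := by
  obtain ⟨A, rfl⟩ := hreg
  refine ⟨{ Q := A.Q, finQ := A.finQ,
            δ := fun q a => {q' | q' ∈ A.δ q a ∧ A.Live q ∧ A.Live q'},
            init := A.init, F := Set.univ }, fun q => trivial, ?_⟩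
  apply Set.Subset.antisymm
  · -- every word with a run through live states is in A.Lang, by closedness
    rintro w ⟨r, hr0, hstep, -⟩
    apply hclosed
    intro n
    have hLive : ∀ k, A.Live (r k) := fun k => (hstep k).2.1
    obtain ⟨u, s, hs0, hsstep, hsinf⟩ := hLive n
    refine ⟨fun k => if k < n then w k else u (k - n),
      ⟨fun k => if k < n then r k else s (k - n), ?_, ?_, ?_⟩,
      fun k hk => if_pos hk⟩
    · by_cases h : 0 < n
      · simpa [h] using hr0
      · have hn : n = 0 := by omega
        simp [hn, hs0, hr0]
    · intro k
      by_cases hk : k + 1 < n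
      · have hk' : k < n := by omega
        simpa [hk, hk'] using (hstep k).1
      · by_cases hk' : k < n
        · have hkn : k + 1 = n := by omega
          have hss : s (k + 1 - n) = r (k + 1) := by
            rw [hkn]
            simpa using hs0
          have hs0' : s 0 = r (k + 1) := by rw [hs0, hkn]
          simpa [hk, hk', hss, hs0'] using (hstep k).1
        · have h1 : ¬ (k + 1 < n) := hk
          have h2 : k + 1 - n = (k - n) + 1 := by omega
          simpa [hk', h1, h2] using hsstep (k - n)
    · have himg : ((· + n) '' {k | s k ∈ A.F}).Infinite :=
        hsinf.image (Set.injOn_of_injective (add_left_injective n))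
      apply himg.mono
      rintro k ⟨j, hj, rfl⟩
      have h1 : ¬ (j + n < n) := by omega
      have h2 : j + n - n = j := by omega
      simpa [h1, h2] using hj
  · -- A.Lang is included: accepting runs stay within live states
    rintro w ⟨r, hr0, hstep, hinf⟩
    have hLive : ∀ m, A.Live (r m) := by
      intro m
      refine ⟨fun k => w (m + k), fun k => r (m + k), rfl, fun k => ?_, ?_⟩
      · have := hstep (m + k)
        simpa [Nat.add_assoc] using this
      · have h1 : ({k | r k ∈ A.F} \ Set.Iio m).Infinite :=
          hinf.diff (Set.finite_Iio m)
        have h2 : ((· - m) '' ({k | r k ∈ A.F} \ Set.Iio m)).Infinite := by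
          apply h1.image
          intro a ha b hb hab
          simp only [Set.mem_diff, Set.mem_Iio, not_lt] at ha hb
          simp only at hab
          omega
        apply h2.mono
        rintro k ⟨j, ⟨hj, hjm⟩, rfl⟩
        simp only [Set.mem_Iio, not_lt] at hjm
        have h3 : m + (j - m) = j := by omega
        simpa [h3] using hj
    refine ⟨r, hr0, fun k => ⟨hstep k, hLive k, hLive (k + 1)⟩, ?_⟩
    simpa using Set.infinite_univ (α := ℕ)
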